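/- Let K be a symmetric positive semidefinite T×T real matrix with diagonal entries K_{ii} ≤ 1, let R > 0 and define the posterior variance recursion: with A ⊆ {1,...,T} an index set, σ_A²(x) = K_{xx} − k_A(x)ᵀ(K_A + R²I)^{−1}k_A(x), where K_A is the submatrix of K indexed by A and k_A(x) the vector (K_{x,a})_{a∈A}. Then for any sequence of indices x_1, ..., x_n added one at a time with A_t = {x_1,...,x_{t−1}}, we have ∑_{t=1}^n log(1 + R^{−2}·σ_{A_t}²(x_t)) = log det(I + R^{−2}·K_{A_{n+1}}). -/

import Mathlib

open Matrix Real Finset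

private lemma psd_smul_aux {m : Type*} [Fintype m] {A : Matrix m m ℝ}
    (hA : A.PosSemidef) {c : ℝ} (hc : 0 ≤ c) : (c • A).PosSemidef := by
  exact hA.smul hc

private lemma pd_smul_one {m : Type*} [Fintype m] [DecidableEq m] {c : ℝ} (hc : 0 < c) :
    (c • (1 : Matrix m m ℝ)).PosDef := by
  exact Matrix.PosDef.one.smul hc

/-- Information-gain telescoping identity: for a symmetric PSD kernel matrix
`K` with diagonal at most 1 and a sequence of queried indices `x 0, x 1, ...`,
the sum over `t < n` of `log (1 + R⁻² σ_t²(x t))`, where `σ_t²` is the GP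
posterior variance conditioned on the first `t` points, equals
`log det (I + R⁻² K_n)` with `K_n` the Gram matrix of the first `n` points. -/
theorem information_gain_telescoping
    (T : ℕ) (K : Matrix (Fin T) (Fin T) ℝ) (hK : K.PosSemidef)
    (hdiag : ∀ i, K i i ≤ 1) (R : ℝ) (hR : 0 < R)
    (x : ℕ → Fin T) (n : ℕ)
    (Kmat : ∀ t : ℕ, Matrix (Fin t) (Fin t) ℝ)
    (hKmat : ∀ t, Kmat t = Matrix.of fun i j : Fin t => K (x i) (x j))
    (kvec : ∀ t : ℕ, Fin t → ℝ)
    (hkvec : ∀ t, kvec t = fun i : Fin t => K (x t) (x i))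
    (σsq : ℕ → ℝ)
    (hσsq : ∀ t, σsq t = K (x t) (x t) -
      kvec t ⬝ᵥ ((Kmat t + R ^ 2 • (1 : Matrix (Fin t) (Fin t) ℝ))⁻¹ *ᵥ kvec t)) :
    ∑ t ∈ Finset.range n, Real.log (1 + R⁻¹ ^ 2 * σsq t)
      = Real.log ((1 + R⁻¹ ^ 2 • Kmat n).det) := by
  set c : ℝ := R⁻¹ ^ 2 with hcdef
  have hc : (0 : ℝ) < c := by positivity
  have hcR : c * R ^ 2 = 1 := by
    rw [hcdef, ← mul_pow, inv_mul_cancel₀ hR.ne', one_pow]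
  -- PSD of the Gram submatrices
  have hKsub : ∀ t, (Kmat t).PosSemidef := by
    intro t
    rw [hKmat]
    exact hK.submatrix fun i : Fin t => x ↑i
  -- PosDef of I + c • Kmat t
  have hMpd : ∀ t, (1 + c • Kmat t).PosDef :=
    fun t => Matrix.PosDef.add_posSemidef Matrix.PosDef.one (psd_smul_aux (hKsub t) hc.le)
  induction n with
  | zero =>
    simp [Matrix.det_isEmpty]
  | succ n ih =>
    -- notation
    set A : Matrix (Fin n) (Fin n) ℝ := 1 + c • Kmat n with hAdef
    set X : Matrix (Fin n) (Fin n) ℝ := Kmat n + R ^ 2 • 1 with hXdef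
    have hXpd : X.PosDef := Matrix.PosDef.posSemidef_add (hKsub n) (pd_smul_one (by positivity))
    have hA_eq : A = c • X := by
      rw [hAdef, hXdef, smul_add, smul_smul, hcR, one_smul, add_comm]
    have hAinv : A⁻¹ = c⁻¹ • X⁻¹ := by
      apply Matrix.inv_eq_right_inv
      rw [hA_eq, Matrix.smul_mul, Matrix.mul_smul, smul_smul,
        mul_inv_cancel₀ hc.ne', one_smul,
        Matrix.mul_nonsing_inv _ hXpd.det_pos.ne'.isUnit]
    -- blocks
    set B : Matrix (Fin n) (Fin 1) ℝ := Matrix.of fun i _ => c * K (x i) (x n) with hBdef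
    set C : Matrix (Fin 1) (Fin n) ℝ := Matrix.of fun _ j => c * K (x n) (x j) with hCdef
    set D : Matrix (Fin 1) (Fin 1) ℝ := Matrix.of fun _ _ => 1 + c * K (x n) (x n) with hDdef
    have hsub : (1 + c • Kmat (n + 1)).submatrix finSumFinEquiv finSumFinEquiv
        = Matrix.fromBlocks A B C D := by
      ext i j
      rcases i with i | i <;> rcases j with j | j <;>
        simp [hKmat, Matrix.one_apply, Fin.ext_iff, hAdef, hBdef, hCdef, hDdef,
          Fin.fin_one_eq_zero] <;>
        · intro h; omega
    haveI : Invertible A := A.invertibleOfIsUnitDet (hMpd n).det_pos.ne'.isUnit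
    have hCAB : (C * A⁻¹ * B) 0 0 = c * (kvec n ⬝ᵥ X⁻¹ *ᵥ kvec n) := by
      rw [hAinv]
      simp only [hBdef, hCdef, hkvec, Matrix.mul_apply, Matrix.smul_apply, Matrix.of_apply,
        dotProduct, mulVec, smul_eq_mul, Finset.mul_sum, Finset.sum_mul]
      rw [Finset.sum_comm]
      refine Finset.sum_congr rfl fun i _ => Finset.sum_congr rfl fun j _ => ?_
      rw [show K (x ↑j) (x n) = K (x n) (x ↑j) by
        conv_lhs => rw [← hK.1]
        simp [Matrix.conjTranspose_apply]]
      field_simp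
    have hentry : (D - C * A⁻¹ * B) 0 0 = 1 + c * σsq n := by
      rw [Matrix.sub_apply, hCAB, hσsq, hDdef]
      simp only [Matrix.of_apply, hXdef]
      ring
    have hdet : (1 + c • Kmat (n + 1)).det = A.det * (1 + c * σsq n) := by
      rw [← Matrix.det_submatrix_equiv_self finSumFinEquiv, hsub,
        Matrix.det_fromBlocks₁₁, Matrix.det_fin_one, invOf_eq_nonsing_inv, hentry]
    have h1 : 0 < A.det := (hMpd n).det_pos
    have h2 : 0 < (1 + c • Kmat (n + 1)).det := (hMpd (n + 1)).det_pos
    have hpos : 0 < 1 + c * σsq n := by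
      rw [hdet] at h2
      nlinarith [h1, h2]
    rw [Finset.sum_range_succ, ih, hdet, Real.log_mul h1.ne' hpos.ne']
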